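/- Let k be a field of characteristic 2, let n ≥ 1, let J ⊆ {1, …, n} and let e = Σ_{j∈J} E_{j,j+1} ∈ sl_{n+1}(k) be a sum of superdiagonal matrix units (a sum of simple root vectors). Then e lies in the range of (ad e)² if and only if there exist scalars a_j ∈ k (j ∈ J) such that (ad e)²(Σ_{j∈J} a_j E_{j+1,j}) = e. -/

import Mathlib

lemma aux_main (k : Type*) [Field k] (n : ℕ) (J : Finset (Fin n))
    (E X : Matrix (Fin (n+1)) (Fin (n+1)) k)
    (hE : E = ∑ j ∈ J, Matrix.single j.castSucc j.succ (1 : k))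
    (hX : E * E * X + X * (E * E) = E) :
    E * E * (∑ j ∈ J, (X j.succ j.castSucc) • Matrix.single j.succ j.castSucc (1 : k))
      + (∑ j ∈ J, (X j.succ j.castSucc) • Matrix.single j.succ j.castSucc (1 : k))
        * (E * E) = E := by
  classical
  -- left/right multiplication by E on std basis matrices
  have hL : ∀ (r s : Fin (n+1)) (c : k), E * Matrix.single r s c
      = ∑ i ∈ J, if i.succ = r then Matrix.single i.castSucc s c else 0 := by
    intro r s c
    rw [hE, Finset.sum_mul]
    refine Finset.sum_congr rfl fun i _ => ?_
    by_cases h : i.succ = r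
    · subst h; rw [if_pos rfl, Matrix.single_mul_single_same, one_mul]
    · rw [if_neg h, Matrix.single_mul_single_of_ne (h := h)]
  have hR : ∀ (r s : Fin (n+1)) (c : k), Matrix.single r s c * E
      = ∑ i ∈ J, if s = i.castSucc then Matrix.single r i.succ c else 0 := by
    intro r s c
    rw [hE, Finset.mul_sum]
    refine Finset.sum_congr rfl fun i _ => ?_
    by_cases h : s = i.castSucc
    · subst h; rw [if_pos rfl, Matrix.single_mul_single_same, mul_one]
    · rw [if_neg h, Matrix.single_mul_single_of_ne (h := h)]
  -- entry formulas
  have hLe : ∀ (Y : Matrix (Fin (n+1)) (Fin (n+1)) k) (p q : Fin (n+1)),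
      (E * Y) p q = ∑ i ∈ J, if i.castSucc = p then Y i.succ q else 0 := by
    intro Y p q
    rw [hE, Finset.sum_mul, Matrix.sum_apply]
    refine Finset.sum_congr rfl fun i _ => ?_
    by_cases h : i.castSucc = p
    · subst h; rw [if_pos rfl, Matrix.single_mul_apply_same, one_mul]
    · rw [if_neg h]
      exact Matrix.single_mul_apply_of_ne _ _ _ _ _ (Ne.symm h) _
  have hRe : ∀ (Y : Matrix (Fin (n+1)) (Fin (n+1)) k) (p q : Fin (n+1)),
      (Y * E) p q = ∑ i ∈ J, if i.succ = q then Y p i.castSucc else 0 := by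
    intro Y p q
    rw [hE, Finset.mul_sum, Matrix.sum_apply]
    refine Finset.sum_congr rfl fun i _ => ?_
    by_cases h : i.succ = q
    · subst h; rw [if_pos rfl, Matrix.mul_single_apply_same, mul_one]
    · rw [if_neg h]
      exact Matrix.mul_single_apply_of_ne _ _ _ _ _ (Ne.symm h) _
  -- the entry identity coming from hX
  have hkey : ∀ j ∈ J,
      (∑ i ∈ J, if i.castSucc = j.succ then X i.succ i.castSucc else 0)
        + (∑ i ∈ J, if i.succ = j.castSucc then X i.succ i.castSucc else 0) = 1 := by
    intro j hj
    have h1 := congrFun (congrFun (congrArg (fun M => (M : Matrix _ _ k)) hX) j.castSucc) j.succ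
    simp only [Matrix.add_apply] at h1
    rw [mul_assoc E E X] at h1
    rw [hLe (E * X) j.castSucc j.succ] at h1
    rw [← mul_assoc X E E, hRe (X * E) j.castSucc j.succ] at h1
    have e1 : (∑ i ∈ J, if i.castSucc = j.castSucc then (E*X) i.succ j.succ else 0)
        = (E*X) j.succ j.succ := by
      simp only [Fin.castSucc_inj]
      rw [Finset.sum_ite_eq' J j (fun i => (E*X) i.succ j.succ), if_pos hj]
    have e2 : (∑ i ∈ J, if i.succ = j.succ then (X*E) j.castSucc i.castSucc else 0)
        = (X*E) j.castSucc j.castSucc := by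
      simp only [Fin.succ_inj]
      rw [Finset.sum_ite_eq' J j (fun i => (X*E) j.castSucc i.castSucc), if_pos hj]
    rw [e1, e2, hLe X j.succ j.succ, hRe X j.castSucc j.castSucc] at h1
    have e3 : E j.castSucc j.succ = 1 := by
      rw [hE, Matrix.sum_apply]
      have hterm : ∀ i ∈ J, Matrix.single i.castSucc i.succ (1:k) j.castSucc j.succ
          = if i = j then 1 else 0 := by
        intro i _
        by_cases h : i = j
        · subst h; simp
        · rw [if_neg h]
          apply Matrix.single_apply_of_ne
          rintro ⟨h1, -⟩
          exact h (Fin.castSucc_inj.mp h1)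
      rw [Finset.sum_congr rfl hterm, Finset.sum_ite_eq' J j (fun _ => (1:k)), if_pos hj]
    rw [e3] at h1
    rw [← h1]
    congr 1
    · refine Finset.sum_congr rfl fun i _ => ?_
      by_cases h : i.castSucc = j.succ
      · rw [if_pos h, if_pos h]; rw [← h]
      · rw [if_neg h, if_neg h]
    · refine Finset.sum_congr rfl fun i _ => ?_
      by_cases h : i.succ = j.castSucc
      · rw [if_pos h, if_pos h]; rw [← h]
      · rw [if_neg h, if_neg h]
  -- multiplication formulas for the generators of M
  have hM1 : ∀ j ∈ J, E * (E * Matrix.single j.succ j.castSucc (1:k))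
      = ∑ i ∈ J, if i.succ = j.castSucc
          then Matrix.single i.castSucc i.succ (1:k) else 0 := by
    intro j hj
    rw [hL j.succ j.castSucc 1]
    have hinner : (∑ i ∈ J, if i.succ = j.succ
        then Matrix.single i.castSucc j.castSucc (1:k) else 0)
        = Matrix.single j.castSucc j.castSucc 1 := by
      simp only [Fin.succ_inj]
      rw [Finset.sum_ite_eq' J j, if_pos hj]
    rw [hinner, hL j.castSucc j.castSucc 1]
    refine Finset.sum_congr rfl fun i _ => ?_
    by_cases h : i.succ = j.castSucc
    · rw [if_pos h, if_pos h, ← h]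
    · rw [if_neg h, if_neg h]
  have hM2 : ∀ j ∈ J, (Matrix.single j.succ j.castSucc (1:k) * E) * E
      = ∑ i ∈ J, if j.succ = i.castSucc
          then Matrix.single i.castSucc i.succ (1:k) else 0 := by
    intro j hj
    rw [hR j.succ j.castSucc 1]
    have hinner : (∑ i ∈ J, if j.castSucc = i.castSucc
        then Matrix.single j.succ i.succ (1:k) else 0)
        = Matrix.single j.succ j.succ 1 := by
      simp only [Fin.castSucc_inj]
      rw [Finset.sum_ite_eq J j, if_pos hj]
    rw [hinner, hR j.succ j.succ 1]
    refine Finset.sum_congr rfl fun i _ => ?_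
    by_cases h : j.succ = i.castSucc
    · rw [if_pos h, if_pos h, h]
    · rw [if_neg h, if_neg h]
  have lhs1 : E * E * (∑ j ∈ J, (X j.succ j.castSucc) •
        Matrix.single j.succ j.castSucc (1 : k))
      = ∑ j ∈ J, ∑ i ∈ J, (if i.succ = j.castSucc
          then X j.succ j.castSucc • Matrix.single i.castSucc i.succ (1:k) else 0) := by
    rw [Finset.mul_sum]
    refine Finset.sum_congr rfl fun j hj => ?_
    rw [mul_smul_comm, mul_assoc, hM1 j hj, Finset.smul_sum]
    refine Finset.sum_congr rfl fun i _ => ?_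
    split_ifs <;> simp
  have lhs2 : (∑ j ∈ J, (X j.succ j.castSucc) •
        Matrix.single j.succ j.castSucc (1 : k)) * (E * E)
      = ∑ j ∈ J, ∑ i ∈ J, (if j.succ = i.castSucc
          then X j.succ j.castSucc • Matrix.single i.castSucc i.succ (1:k) else 0) := by
    rw [Finset.sum_mul]
    refine Finset.sum_congr rfl fun j hj => ?_
    rw [smul_mul_assoc, ← mul_assoc, hM2 j hj, Finset.smul_sum]
    refine Finset.sum_congr rfl fun i _ => ?_
    split_ifs <;> simp
  have rhs : E = ∑ j ∈ J,
      ((∑ i ∈ J, if i.castSucc = j.succ then X i.succ i.castSucc else 0)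
        + (∑ i ∈ J, if i.succ = j.castSucc then X i.succ i.castSucc else 0)) •
        Matrix.single j.castSucc j.succ (1:k) := by
    conv_lhs => rw [hE]
    refine Finset.sum_congr rfl fun j hj => ?_
    rw [hkey j hj, one_smul]
  have rhssplit : (∑ j ∈ J,
      ((∑ i ∈ J, if i.castSucc = j.succ then X i.succ i.castSucc else 0)
        + (∑ i ∈ J, if i.succ = j.castSucc then X i.succ i.castSucc else 0)) •
        Matrix.single j.castSucc j.succ (1:k))
      = (∑ j ∈ J, ∑ i ∈ J, if i.castSucc = j.succ
          then X i.succ i.castSucc • Matrix.single j.castSucc j.succ (1:k) else 0)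
        + (∑ j ∈ J, ∑ i ∈ J, if i.succ = j.castSucc
          then X i.succ i.castSucc • Matrix.single j.castSucc j.succ (1:k) else 0) := by
    rw [← Finset.sum_add_distrib]
    refine Finset.sum_congr rfl fun j hj => ?_
    rw [add_smul, Finset.sum_smul, Finset.sum_smul]
    congr 1 <;> exact Finset.sum_congr rfl fun i _ => by split_ifs <;> simp
  have hT1 : (∑ j ∈ J, ∑ i ∈ J, if i.castSucc = j.succ
        then X i.succ i.castSucc • Matrix.single j.castSucc j.succ (1:k) else 0)
      = ∑ j ∈ J, ∑ i ∈ J, (if i.succ = j.castSucc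
        then X j.succ j.castSucc • Matrix.single i.castSucc i.succ (1:k) else 0) := by
    rw [Finset.sum_comm]
    refine Finset.sum_congr rfl fun i _ => Finset.sum_congr rfl fun j _ => ?_
    by_cases h : i.castSucc = j.succ
    · rw [if_pos h, if_pos h.symm]
    · rw [if_neg h, if_neg (fun hc => h hc.symm)]
  have hT2 : (∑ j ∈ J, ∑ i ∈ J, if i.succ = j.castSucc
        then X i.succ i.castSucc • Matrix.single j.castSucc j.succ (1:k) else 0)
      = ∑ j ∈ J, ∑ i ∈ J, (if j.succ = i.castSucc
        then X j.succ j.castSucc • Matrix.single i.castSucc i.succ (1:k) else 0) := by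
    rw [Finset.sum_comm]
  rw [lhs1, lhs2, ← hT1, ← hT2, ← rhssplit, ← rhs]

open LieAlgebra.SpecialLinear in
/-- Let `e = Σ_{j∈J} E_{j,j+1} ∈ sl_{n+1}(k)` be a sum of superdiagonal
matrix units, `k` of characteristic 2. Then `e ∈ range (ad e)²` iff there are scalars
`a_j` with `(ad e)² (Σ_{j∈J} a_j E_{j+1,j}) = e`. -/
theorem stmt_17 (k : Type*) [Field k] [CharP k 2]
    (n : ℕ) (hn : 1 ≤ n) (J : Finset (Fin n))
    (e : sl (Fin (n + 1)) k)
    (he : e.val = ∑ j ∈ J, Matrix.single j.castSucc j.succ (1 : k)) :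
    e ∈ LinearMap.range ((LieAlgebra.ad k (sl (Fin (n + 1)) k) e) ^ 2) ↔
      ∃ (a : Fin n → k) (f : sl (Fin (n + 1)) k),
        f.val = ∑ j ∈ J, a j • Matrix.single j.succ j.castSucc (1 : k) ∧
        ((LieAlgebra.ad k (sl (Fin (n + 1)) k) e) ^ 2) f = e := by
  classical
  constructor
  · rintro ⟨x, hx⟩
    have had : ∀ y : sl (Fin (n+1)) k,
        (((LieAlgebra.ad k (sl (Fin (n + 1)) k) e) ^ 2) y).val
          = e.val * e.val * y.val + y.val * (e.val * e.val) := by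
      intro y
      have h0 : (((LieAlgebra.ad k (sl (Fin (n + 1)) k) e) ^ 2) y) = ⁅e, ⁅e, y⁆⁆ := by
        rw [pow_two, Module.End.mul_apply, LieAlgebra.ad_apply, LieAlgebra.ad_apply]
      rw [h0, sl_bracket, sl_bracket]
      have h2 : ∀ A : Matrix (Fin (n+1)) (Fin (n+1)) k, A + A = 0 := by
        intro A
        rw [← two_smul k A, show (2:k) = 0 from by exact_mod_cast CharP.cast_eq_zero k 2,
          zero_smul]
      have expand : e.val*(e.val*y.val - y.val*e.val) - (e.val*y.val - y.val*e.val)*e.val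
          = e.val*e.val*y.val + y.val*(e.val*e.val)
            - (e.val*y.val*e.val + e.val*y.val*e.val) := by noncomm_ring
      rw [expand, h2, sub_zero]
    have hX : e.val * e.val * x.val + x.val * (e.val*e.val) = e.val := by
      have h1 := congrArg Subtype.val hx
      rw [had x] at h1
      exact h1
    have hMmem : (∑ j ∈ J, (x.val j.succ j.castSucc) •
        Matrix.single j.succ j.castSucc (1:k)) ∈ sl (Fin (n+1)) k := by
      show _ ∈ LinearMap.ker (Matrix.traceLinearMap (Fin (n+1)) k k)
      rw [LinearMap.mem_ker, Matrix.traceLinearMap_apply, Matrix.trace_sum]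
      refine Finset.sum_eq_zero fun j _ => ?_
      rw [Matrix.trace_smul, Matrix.trace_single_eq_of_ne _ _ _ (Fin.castSucc_lt_succ (i := j)).ne',
        smul_zero]
    refine ⟨fun j => x.val j.succ j.castSucc, ⟨_, hMmem⟩, rfl, ?_⟩
    apply Subtype.ext
    rw [had ⟨_, hMmem⟩]
    exact aux_main k n J e.val x.val he hX
  · rintro ⟨a, f, -, hf⟩
    exact ⟨f, hf⟩
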